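/- With T(z) = z³ − 3z, R(z) = a z + 1/(a z) and S(z) = a ω z + 1/(a ω z) where a ≠ 0 and ω² + ω + 1 = 0, there is no Möbius transformation σ ∈ PSL₂(ℂ) with R = σ ∘ S. Equivalently: there do not exist complex numbers p, q, r, s with ps − qr ≠ 0 such that R(z) = (p·S(z) + q)/(r·S(z) + s) for all z in the common domain. -/

import Mathlib

open Polynomial

theorem stmt4 (a ω : ℂ) (ha : a ≠ 0) (hω : ω ^ 2 + ω + 1 = 0) :
    ¬ ∃ p q r s : ℂ, p * s - q * r ≠ 0 ∧
      ∀ z : ℂ, z ≠ 0 →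
        r * (a * ω * z + 1 / (a * ω * z)) + s ≠ 0 →
        a * z + 1 / (a * z) =
          (p * (a * ω * z + 1 / (a * ω * z)) + q) /
            (r * (a * ω * z + 1 / (a * ω * z)) + s) := by
  rintro ⟨p, q, r, s, hdet, h⟩
  have hω0 : ω ≠ 0 := by
    intro h0; rw [h0] at hω; norm_num at hω
  have hω2 : ω ^ 2 ≠ 1 := by
    intro h2
    have : ω = -2 := by linear_combination hω - h2
    rw [this] at h2; norm_num at h2
  -- the polynomial of "bad" points
  set Q : ℂ[X] := X * (C (r * a ^ 2 * ω ^ 2) * X ^ 2 + C (s * a * ω) * X + C r) *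
      (C (a ^ 2 * ω ^ 2) * X ^ 2 - 1) with hQ
  have hQ2 : (C (r * a ^ 2 * ω ^ 2) * X ^ 2 + C (s * a * ω) * X + C r : ℂ[X]) ≠ 0 := by
    rcases eq_or_ne r 0 with hr | hr
    · have hs : s ≠ 0 := by
        intro hs; apply hdet; rw [hr, hs]; ring
      intro hc
      have := congrArg (fun f => Polynomial.coeff f 1) hc
      simp only [coeff_add, coeff_C_mul, coeff_X_pow, coeff_X_one, coeff_C, coeff_zero] at this
      norm_num at this
      obtain (h' | h') | h' := this
      exacts [hs h', ha h', hω0 h']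
    · intro hc
      have := congrArg (fun f => Polynomial.coeff f 0) hc
      simp [coeff_zero] at this
      exact hr this
  have hQ3 : (C (a ^ 2 * ω ^ 2) * X ^ 2 - 1 : ℂ[X]) ≠ 0 := by
    intro hc
    have := congrArg (fun f => Polynomial.coeff f 0) hc
    simp at this
  have hQne : Q ≠ 0 := mul_ne_zero (mul_ne_zero X_ne_zero hQ2) hQ3
  obtain ⟨z, hz⟩ := (Polynomial.finite_setOf_isRoot hQne).infinite_compl.nonempty
  simp only [Set.mem_compl_iff, Set.mem_setOf_eq, IsRoot.def] at hz
  rw [hQ] at hz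
  simp only [eval_mul, eval_add, eval_sub, eval_pow, eval_X, eval_C, eval_one] at hz
  have hz0 : z ≠ 0 := fun h0 => hz (by rw [h0]; ring)
  have hquad : r * a ^ 2 * ω ^ 2 * z ^ 2 + s * a * ω * z + r ≠ 0 := fun h0 => hz (by rw [h0]; ring)
  have hsq : a ^ 2 * ω ^ 2 * z ^ 2 - 1 ≠ 0 := fun h0 => hz (by rw [h0]; ring)
  have haωz : a * ω * z ≠ 0 := mul_ne_zero (mul_ne_zero ha hω0) hz0
  -- the denominator at z is nonzero
  have hD : r * (a * ω * z + 1 / (a * ω * z)) + s ≠ 0 := by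
    intro h0
    apply hquad
    have := congrArg (fun t => t * (a * ω * z)) h0
    simp only [zero_mul] at this
    rw [← this]; field_simp; ring
  -- the mirror point
  set w : ℂ := 1 / (a ^ 2 * ω ^ 2 * z) with hwdef
  have hw0 : w ≠ 0 := one_div_ne_zero (mul_ne_zero (mul_ne_zero (pow_ne_zero 2 ha) (pow_ne_zero 2 hω0)) hz0)
  have e1 : a * ω * w = 1 / (a * ω * z) := by
    rw [hwdef]; field_simp
  have e2 : a * w = 1 / (a * ω ^ 2 * z) := by
    rw [hwdef]; field_simp
  have hSw : a * ω * w + 1 / (a * ω * w) = a * ω * z + 1 / (a * ω * z) := by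
    rw [e1, one_div_one_div]; ring
  have h1 := h z hz0 hD
  have h2 := h w hw0 (by rw [hSw]; exact hD)
  rw [hSw] at h2
  have key : a * z + 1 / (a * z) = a * w + 1 / (a * w) := by rw [h1, h2]
  rw [e2, one_div_one_div] at key
  apply hsq
  have hne : (1 : ℂ) - ω ^ 2 ≠ 0 := sub_ne_zero.mpr (Ne.symm hω2)
  field_simp at key
  have key2 : (a ^ 2 * ω ^ 2 * z ^ 2 - 1) * ((1 - ω ^ 2) * (a * z)) = 0 := by
    linear_combination (a * z) * key
  rcases mul_eq_zero.mp key2 with h' | h'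
  · exact h'
  · exact absurd h' (mul_ne_zero hne (mul_ne_zero ha hz0))
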